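/- For any integer-valued random variable Y with finite second moment, the Shannon entropy satisfies H(Y) ≤ (1/2) log(2πe (Var(Y) + 1/12)). -/

import Mathlib

open Real MeasureTheory ProbabilityTheory

lemma hasSum_meas_mul {ν : Measure ℤ} {f : ℤ → ℝ} (hf : Integrable f ν) :
    HasSum (fun k => (ν {k}).toReal * f k) (∫ k, f k ∂ν) := by
  have h := ν.sum_smul_dirac
  rw [← h] at hf
  have h2 := hasSum_integral_measure (f := f) hf
  rw [h] at h2
  convert h2 using 2 with k
  · rfl
  rw [integral_smul_measure, integral_dirac, smul_eq_mul]

lemma interval_exp_jensen (m s2 : ℝ) (_hs2 : 0 < s2) (k : ℤ) :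
    Real.exp (-(((k : ℝ) - m) ^ 2 + 1 / 12) / (2 * s2)) ≤
      ∫ x in Set.Ioc ((k : ℝ) - 1 / 2) ((k : ℝ) + 1 / 2),
        Real.exp (-((x - m) ^ 2) / (2 * s2)) := by
  set a : ℝ := (k : ℝ) - 1 / 2 with ha
  have hab : (k : ℝ) + 1 / 2 = a + 1 := by rw [ha]; ring
  rw [hab]
  haveI hprob : IsProbabilityMeasure (volume.restrict (Set.Ioc a (a + 1))) := by
    constructor
    rw [Measure.restrict_apply_univ, Real.volume_Ioc]
    norm_num
  have hfc : Continuous fun x : ℝ => -((x - m) ^ 2) / (2 * s2) :=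
    (((continuous_id.sub continuous_const).pow 2).neg).div_const _
  have hfi : Integrable (fun x : ℝ => -((x - m) ^ 2) / (2 * s2))
      (volume.restrict (Set.Ioc a (a + 1))) :=
    (hfc.continuousOn.integrableOn_Icc).mono_set Set.Ioc_subset_Icc_self
  have hgi : Integrable (fun x : ℝ => Real.exp (-((x - m) ^ 2) / (2 * s2)))
      (volume.restrict (Set.Ioc a (a + 1))) :=
    ((Real.continuous_exp.comp hfc).continuousOn.integrableOn_Icc).mono_set
      Set.Ioc_subset_Icc_self
  have hJ := convexOn_exp.map_average_le Real.continuous_exp.continuousOn isClosed_univ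
    (μ := volume.restrict (Set.Ioc a (a + 1)))
    (Filter.Eventually.of_forall fun x => Set.mem_univ _) hfi hgi
  rw [average_eq_integral, average_eq_integral] at hJ
  refine le_trans (le_of_eq ?_) hJ
  congr 1
  have hle : a ≤ a + 1 := by linarith
  rw [← intervalIntegral.integral_of_le hle]
  have hrw : ∀ x : ℝ, -((x - m) ^ 2) / (2 * s2) = (x - m) ^ 2 * (-(1 / (2 * s2))) := by
    intro x; ring
  simp_rw [hrw]
  rw [intervalIntegral.integral_mul_const,
    intervalIntegral.integral_comp_sub_right (fun x => x ^ 2) m, integral_pow]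
  rw [ha]
  push_cast
  ring

theorem discrete_entropy_bound (Ω : Type*) [MeasurableSpace Ω]
    (μ : Measure Ω) [IsProbabilityMeasure μ]
    (Y : Ω → ℤ) (hY_meas : Measurable Y)
    (hY2 : Integrable (fun ω => ((Y ω : ℝ)) ^ 2) μ) :
    -∑' k : ℤ, (μ {ω | Y ω = k}).toReal * Real.log (μ {ω | Y ω = k}).toReal
      ≤ (1 / 2) * Real.log (2 * π * Real.exp 1
          * (variance (fun ω => (Y ω : ℝ)) μ + 1 / 12)) := by
  classical
  set X : Ω → ℝ := fun ω => ((Y ω : ℝ)) with hXdef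
  have hXm : Measurable X := measurable_from_top.comp hY_meas
  have hL2 : MemLp X 2 μ := (memLp_two_iff_integrable_sq hXm.aestronglyMeasurable).2 hY2
  set m : ℝ := ∫ ω, X ω ∂μ with hm
  set V : ℝ := variance X μ with hV
  have hV0 : 0 ≤ V := variance_nonneg _ _
  set s2 : ℝ := V + 1 / 12 with hs2def
  have hs2 : 0 < s2 := by rw [hs2def]; linarith
  set ν : Measure ℤ := μ.map Y with hν
  haveI : IsProbabilityMeasure ν := Measure.isProbabilityMeasure_map hY_meas.aemeasurable
  have hνk : ∀ k : ℤ, μ {ω | Y ω = k} = ν {k} := by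
    intro k
    rw [hν, Measure.map_apply hY_meas (measurableSet_singleton k)]
    rfl
  set p : ℤ → ℝ := fun k => (ν {k}).toReal with hp
  simp_rw [hνk]
  have hp_nonneg : ∀ k, 0 ≤ p k := fun k => ENNReal.toReal_nonneg
  -- sum of p is 1
  have hsum_p : HasSum p 1 := by
    have h := hasSum_meas_mul (ν := ν) (f := fun _ => (1 : ℝ)) (integrable_const 1)
    simpa using h
  -- variance as a sum
  have hXi2 : Integrable (fun ω => (X ω - m) ^ 2) μ :=
    (hL2.sub (memLp_const m)).integrable_sq
  have hfν : Integrable (fun k : ℤ => ((k : ℝ) - m) ^ 2) ν := by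
    rw [hν, integrable_map_measure measurable_from_top.aestronglyMeasurable
      hY_meas.aemeasurable]
    exact hXi2
  have hVar : V = ∫ ω, (X ω - m) ^ 2 ∂μ := by
    rw [hV]
    exact variance_eq_integral hXm.aemeasurable
  have hint_map : ∫ k, ((k : ℝ) - m) ^ 2 ∂ν = ∫ ω, (X ω - m) ^ 2 ∂μ := by
    rw [hν, integral_map hY_meas.aemeasurable measurable_from_top.aestronglyMeasurable]
  have hsum_var : HasSum (fun k => p k * ((k : ℝ) - m) ^ 2) V := by
    have h := hasSum_meas_mul hfν
    rwa [hint_map, ← hVar] at h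
  -- Gaussian
  set c : ℝ := Real.sqrt (2 * π * s2) with hc
  have h2πs2 : 0 < 2 * π * s2 := by positivity
  have hcpos : 0 < c := Real.sqrt_pos.2 h2πs2
  set G : ℝ → ℝ := fun x => Real.exp (-((x - m) ^ 2) / (2 * s2)) with hG
  have hGrw : ∀ x : ℝ, -((x - m) ^ 2) / (2 * s2) = -(1 / (2 * s2)) * (x - m) ^ 2 := by
    intro x; ring
  have hGi : Integrable G := by
    have h1 : Integrable (fun x : ℝ => Real.exp (-(1 / (2 * s2)) * x ^ 2)) :=
      integrable_exp_neg_mul_sq (by positivity)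
    have h2 := h1.comp_sub_right m
    rw [hG]
    simp_rw [hGrw]
    exact h2
  have hGint : ∫ x, G x = c := by
    rw [hG]
    simp_rw [hGrw]
    rw [show (fun x : ℝ => Real.exp (-(1 / (2 * s2)) * (x - m) ^ 2))
        = fun x : ℝ => (fun y : ℝ => Real.exp (-(1 / (2 * s2)) * y ^ 2)) (x - m) from rfl]
    rw [integral_sub_right_eq_self (fun y : ℝ => Real.exp (-(1 / (2 * s2)) * y ^ 2)) m,
      integral_gaussian, hc]
    congr 1
    rw [one_div, div_eq_mul_inv, inv_inv]
    ring
  set q : ℤ → ℝ := fun k => c⁻¹ * ∫ x in Set.Ioc ((k : ℝ) - 1 / 2) ((k : ℝ) + 1 / 2), G x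
    with hq
  have hsum_q : HasSum q 1 := by
    have h := hGi.hasSum_intervalIntegral (-(1 / 2))
    have h2 := h.mul_left c⁻¹
    rw [hGint, inv_mul_cancel₀ hcpos.ne'] at h2
    have heq : (fun n : ℤ => c⁻¹ * ∫ x in (-(1/2) : ℝ) + (n:ℝ)..(-(1/2) : ℝ) + (n:ℝ) + 1, G x)
        = q := by
      funext n
      simp only [hq]
      have hseteq : Set.Ioc ((-(1/2):ℝ) + (n:ℝ)) ((-(1/2):ℝ) + (n:ℝ) + 1)
          = Set.Ioc ((n:ℝ) - 1/2) ((n:ℝ) + 1/2) := by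
        congr 1 <;> ring
      rw [intervalIntegral.integral_of_le (by linarith), hseteq]
    rw [← heq]
    exact h2
  set L : ℤ → ℝ := fun k => (1 / 2) * Real.log (2 * π * s2)
      + (((k : ℝ) - m) ^ 2 + 1 / 12) / (2 * s2) with hL
  have hq_ge : ∀ k, Real.exp (-(L k)) ≤ q k := by
    intro k
    have hj := interval_exp_jensen m s2 hs2 k
    have h2 : c⁻¹ * Real.exp (-(((k : ℝ) - m) ^ 2 + 1 / 12) / (2 * s2)) ≤ q k := by
      rw [hq]
      exact mul_le_mul_of_nonneg_left hj (by positivity)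
    refine le_trans (le_of_eq ?_) h2
    have hlogc : Real.log c = (1 / 2) * Real.log (2 * π * s2) := by
      rw [hc, Real.log_sqrt h2πs2.le]; ring
    rw [hL, neg_add, Real.exp_add, ← hlogc, ← neg_div, Real.exp_neg, Real.exp_log hcpos]
  have hqpos : ∀ k, 0 < q k := fun k => lt_of_lt_of_le (Real.exp_pos _) (hq_ge k)
  -- termwise bound
  have key : ∀ k, -(p k * Real.log (p k)) ≤ p k * L k + (q k - p k) := by
    intro k
    rcases eq_or_lt_of_le (hp_nonneg k) with h0 | hpos
    · rw [← h0]
      simp only [zero_mul, neg_zero, sub_zero]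
      linarith [hqpos k]
    · have hlog : Real.log (q k) - Real.log (p k) ≤ q k / p k - 1 := by
        have h := Real.log_le_sub_one_of_pos (div_pos (hqpos k) hpos)
        rwa [Real.log_div (hqpos k).ne' hpos.ne'] at h
      have h1 : p k * Real.log (q k) - p k * Real.log (p k) ≤ q k - p k := by
        have h := mul_le_mul_of_nonneg_left hlog hpos.le
        rw [mul_sub, mul_sub, mul_one] at h
        have hqp : p k * (q k / p k) = q k := by field_simp
        rwa [hqp] at h
      have h2 : -(L k) ≤ Real.log (q k) := by
        rw [← Real.log_exp (-(L k))]
        exact Real.log_le_log (Real.exp_pos _) (hq_ge k)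
      have h3 : -(p k * L k) ≤ p k * Real.log (q k) := by
        have h := mul_le_mul_of_nonneg_left h2 (hp_nonneg k)
        rwa [mul_neg] at h
      linarith
  -- sum of the upper bounds
  have hsum_pL : HasSum (fun k => p k * L k)
      ((1 / 2) * Real.log (2 * π * s2) + (V + 1 / 12) / (2 * s2)) := by
    have h1 := hsum_p.mul_left ((1 / 2) * Real.log (2 * π * s2) + (1 / 12) / (2 * s2))
    have h2 := hsum_var.mul_right (1 / (2 * s2))
    have h := h1.add h2
    convert h using 1
    · rfl
    · funext k
      rw [hL]
      ring
    · field_simp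
      ring
  have hsum_f : HasSum (fun k => p k * L k + (q k - p k))
      ((1 / 2) * Real.log (2 * π * s2) + 1 / 2) := by
    have h := hsum_pL.add (hsum_q.sub hsum_p)
    have hval : (V + 1 / 12) / (2 * s2) = 1 / 2 := by
      rw [← hs2def, div_eq_iff (by positivity : (2 : ℝ) * s2 ≠ 0)]
      ring
    rw [hval] at h
    convert h using 1
    ring
  -- nonnegativity of entropy terms
  have hg_nonneg : ∀ k, 0 ≤ -(p k * Real.log (p k)) := by
    intro k
    have hple : p k ≤ 1 := by
      rw [hp]
      have h := prob_le_one (μ := ν) (s := {k})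
      simpa using ENNReal.toReal_mono ENNReal.one_ne_top h
    have hlog : Real.log (p k) ≤ 0 := Real.log_nonpos (hp_nonneg k) hple
    have := mul_nonpos_of_nonneg_of_nonpos (hp_nonneg k) hlog
    linarith
  have hsumm_g : Summable (fun k => -(p k * Real.log (p k))) :=
    Summable.of_nonneg_of_le hg_nonneg key hsum_f.summable
  have hle : ∑' k, -(p k * Real.log (p k)) ≤ (1 / 2) * Real.log (2 * π * s2) + 1 / 2 := by
    rw [← hsum_f.tsum_eq]
    exact Summable.tsum_le_tsum key hsumm_g hsum_f.summable
  rw [← tsum_neg]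
  have hRHS : (1 / 2) * Real.log (2 * π * Real.exp 1 * (V + 1 / 12))
      = (1 / 2) * Real.log (2 * π * s2) + 1 / 2 := by
    rw [show 2 * π * Real.exp 1 * (V + 1 / 12) = (2 * π * s2) * Real.exp 1 by
      rw [hs2def]; ring]
    rw [Real.log_mul h2πs2.ne' (Real.exp_pos 1).ne', Real.log_exp]
    ring
  rw [hRHS]
  exact hle
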